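/- Let Y and Y' be points on the horizontal take-off line, T a point above it, and O a finite set of closed axis-aligned rectangular obstacles. Let P*(Y) be a collision-free increasing convex polygonal chain (CICP) from Y to T of minimum length, and let P(Y') be any CICP from Y' to T. Then P*(Y) does not cross P(Y'); that is, there is no point C common to both chains such that immediately to the right of C the chain P*(Y) goes strictly below P(Y') (equivalently, the segment of P*(Y) leaving C has strictly smaller slope than that of P(Y')). -/

import Mathlib

open Set

/-- Euclidean distance between two points of `ℝ × ℝ`. -/
noncomputable def eudist (p q : ℝ × ℝ) : ℝ :=
  Real.sqrt ((q.1 - p.1) ^ 2 + (q.2 - p.2) ^ 2)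

/-- A polygonal chain in the plane, given by vertices `v 0, v 1, …, v k`. -/
structure PolyChain where
  k : ℕ
  v : ℕ → ℝ × ℝ

namespace PolyChain

/-- The set of points of the chain (union of its edges). -/
def pts (P : PolyChain) : Set (ℝ × ℝ) :=
  ⋃ i ∈ Finset.range P.k, segment ℝ (P.v i) (P.v (i + 1))

/-- Total (Euclidean) length of the chain. -/
noncomputable def length (P : PolyChain) : ℝ :=
  ∑ i ∈ Finset.range P.k, eudist (P.v i) (P.v (i + 1))

/-- Each vertex lies strictly to the right and weakly above its predecessor. -/
def Increasing (P : PolyChain) : Prop :=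
  ∀ i < P.k, (P.v i).1 < (P.v (i + 1)).1 ∧ (P.v i).2 ≤ (P.v (i + 1)).2

/-- Each interior vertex lies on or to the right of the directed line from its
predecessor to its successor: the cross product
`(v (i+2) - v i) × (v (i+1) - v i)` is nonpositive. -/
def ConvexChain (P : PolyChain) : Prop :=
  ∀ i, i + 2 ≤ P.k →
    ((P.v (i + 2)).1 - (P.v i).1) * ((P.v (i + 1)).2 - (P.v i).2)
      - ((P.v (i + 2)).2 - (P.v i).2) * ((P.v (i + 1)).1 - (P.v i).1) ≤ 0

end PolyChain

/-- line through p, q evaluated at x -/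
noncomputable def lin (p q : ℝ × ℝ) (x : ℝ) : ℝ :=
  p.2 + (q.2 - p.2) / (q.1 - p.1) * (x - p.1)

namespace PolyChain

/-- slope of edge i -/
noncomputable def sl (Q : PolyChain) (i : ℕ) : ℝ :=
  ((Q.v (i+1)).2 - (Q.v i).2) / ((Q.v (i+1)).1 - (Q.v i).1)

/-- the chain as function of x (max of edge lines) -/
noncomputable def fn (Q : PolyChain) (x : ℝ) : ℝ :=
  if h : (Finset.range Q.k).Nonempty then
    (Finset.range Q.k).sup' h (fun i => lin (Q.v i) (Q.v (i+1)) x) else 0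

variable {Q : PolyChain}

lemma xlt (hI : Q.Increasing) {i j : ℕ} (hij : i < j) (hj : j ≤ Q.k) :
    (Q.v i).1 < (Q.v j).1 := by
  obtain ⟨d, rfl⟩ : ∃ d, j = i + d + 1 := ⟨j - i - 1, by omega⟩
  clear hij
  induction d with
  | zero => exact (hI i (by omega)).1
  | succ d ih =>
    have h1 : i + d + 1 ≤ Q.k := by omega
    exact lt_trans (ih h1) (by simpa [show i+(d+1)+1 = (i+d+1)+1 by ring] using
      (hI (i+d+1) (by omega)).1)

lemma xle (hI : Q.Increasing) {i j : ℕ} (hij : i ≤ j) (hj : j ≤ Q.k) :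
    (Q.v i).1 ≤ (Q.v j).1 := by
  rcases eq_or_lt_of_le hij with h | h
  · subst h; exact le_refl _
  · exact le_of_lt (xlt hI h hj)

lemma sl_nonneg (hI : Q.Increasing) {i : ℕ} (hi : i < Q.k) : 0 ≤ Q.sl i := by
  have h := hI i hi
  exact div_nonneg (by linarith [h.2]) (by linarith [h.1])

lemma sl_adj (hI : Q.Increasing) (hC : Q.ConvexChain) {i : ℕ} (hi : i + 2 ≤ Q.k) :
    Q.sl i ≤ Q.sl (i+1) := by
  have h1 := (hI i (by omega)).1
  have h2 := (hI (i+1) (by omega)).1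
  have hc := hC i hi
  unfold sl
  rw [div_le_div_iff₀ (by linarith) (by linarith)]
  nlinarith [hc, h1, h2]

lemma sl_mono (hI : Q.Increasing) (hC : Q.ConvexChain) {i j : ℕ} (hij : i ≤ j)
    (hj : j < Q.k) : Q.sl i ≤ Q.sl j := by
  obtain ⟨d, rfl⟩ : ∃ d, j = i + d := ⟨j - i, by omega⟩
  clear hij
  induction d with
  | zero => exact le_refl _
  | succ d ih =>
    have h1 : i + d < Q.k := by omega
    refine le_trans (ih h1) ?_
    have := sl_adj hI hC (i := i + d) (by omega)
    simpa [show i+(d+1) = (i+d)+1 by ring] using this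

lemma lin_self (p q : ℝ × ℝ) : lin p q p.1 = p.2 := by simp [lin]

lemma lin_right {p q : ℝ × ℝ} (h : p.1 < q.1) (x : ℝ) :
    lin p q x = q.2 + (q.2 - p.2) / (q.1 - p.1) * (x - q.1) := by
  unfold lin
  have hne : q.1 - p.1 ≠ 0 := by linarith
  field_simp
  ring

end PolyChain

namespace PolyChain
variable {Q : PolyChain}

/-- line i at the right vertex of edge i equals that vertex's y. -/
lemma lin_at_right (hI : Q.Increasing) {i : ℕ} (hi : i < Q.k) :
    lin (Q.v i) (Q.v (i+1)) (Q.v (i+1)).1 = (Q.v (i+1)).2 := by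
  rw [lin_right (hI i hi).1]; ring

/-- adjacent lines comparison -/
lemma lin_adj_ge (hI : Q.Increasing) (hC : Q.ConvexChain) {i : ℕ} (hi : i + 2 ≤ Q.k)
    {x : ℝ} (hx : (Q.v (i+1)).1 ≤ x) :
    lin (Q.v i) (Q.v (i+1)) x ≤ lin (Q.v (i+1)) (Q.v (i+2)) x := by
  rw [lin_right (hI i (by omega)).1]
  show (Q.v (i+1)).2 + Q.sl i * (x - (Q.v (i+1)).1) ≤
    (Q.v (i+1)).2 + Q.sl (i+1) * (x - (Q.v (i+1)).1)
  have := sl_adj hI hC hi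
  nlinarith [this, hx]

lemma lin_adj_le (hI : Q.Increasing) (hC : Q.ConvexChain) {i : ℕ} (hi : i + 2 ≤ Q.k)
    {x : ℝ} (hx : x ≤ (Q.v (i+1)).1) :
    lin (Q.v (i+1)) (Q.v (i+2)) x ≤ lin (Q.v i) (Q.v (i+1)) x := by
  rw [lin_right (hI i (by omega)).1]
  show (Q.v (i+1)).2 + Q.sl (i+1) * (x - (Q.v (i+1)).1) ≤
    (Q.v (i+1)).2 + Q.sl i * (x - (Q.v (i+1)).1)
  have := sl_adj hI hC hi
  nlinarith [this, hx]

/-- for i ≤ j, line i ≤ line j for x right of vertex j -/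
lemma lin_le_ge (hI : Q.Increasing) (hC : Q.ConvexChain) {i j : ℕ} (hij : i ≤ j)
    (hj : j < Q.k) {x : ℝ} (hx : (Q.v j).1 ≤ x) :
    lin (Q.v i) (Q.v (i+1)) x ≤ lin (Q.v j) (Q.v (j+1)) x := by
  obtain ⟨d, rfl⟩ : ∃ d, j = i + d := ⟨j - i, by omega⟩
  clear hij
  induction d with
  | zero => exact le_refl _
  | succ d ih =>
    have hd : i + d < Q.k := by omega
    have hxd : (Q.v (i+d)).1 ≤ x :=
      le_trans (xle hI (by omega) (by omega)) hx
    refine le_trans (ih hd hxd) ?_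
    have : (Q.v (i+d+1)).1 ≤ x := by
      simpa [show i+(d+1) = i+d+1 by ring] using hx
    have h2 := lin_adj_ge hI hC (i := i + d) (by omega) this
    simpa [show i+(d+1) = i+d+1 by ring] using h2

/-- for j ≤ i, line i ≤ line j for x left of vertex (j+1) -/
lemma lin_le_le (hI : Q.Increasing) (hC : Q.ConvexChain) {i j : ℕ} (hij : j ≤ i)
    (hi : i < Q.k) {x : ℝ} (hx : x ≤ (Q.v (j+1)).1) :
    lin (Q.v i) (Q.v (i+1)) x ≤ lin (Q.v j) (Q.v (j+1)) x := by
  obtain ⟨d, rfl⟩ : ∃ d, i = j + d := ⟨i - j, by omega⟩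
  clear hij
  induction d with
  | zero => exact le_refl _
  | succ d ih =>
    have hd : j + d < Q.k := by omega
    have hxd : x ≤ (Q.v (j+d+1)).1 :=
      le_trans hx (xle hI (by omega) (by omega))
    have h2 := lin_adj_le hI hC (i := j + d) (by omega) hxd
    refine le_trans ?_ (ih hd)
    simpa [show j+(d+1) = j+d+1 by ring] using h2

/-- fn equals line j on edge j -/
lemma fn_edge (hI : Q.Increasing) (hC : Q.ConvexChain) {j : ℕ} (hj : j < Q.k)
    {x : ℝ} (hx1 : (Q.v j).1 ≤ x) (hx2 : x ≤ (Q.v (j+1)).1) :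
    Q.fn x = lin (Q.v j) (Q.v (j+1)) x := by
  have hne : (Finset.range Q.k).Nonempty := ⟨j, Finset.mem_range.2 hj⟩
  unfold fn
  rw [dif_pos hne]
  apply le_antisymm
  · apply Finset.sup'_le
    intro i hi
    have hik := Finset.mem_range.1 hi
    rcases le_or_gt i j with h | h
    · exact lin_le_ge hI hC h hj hx1
    · exact lin_le_le hI hC (by omega) hik hx2
  · exact Finset.le_sup' (fun i => lin (Q.v i) (Q.v (i+1)) x) (Finset.mem_range.2 hj)

lemma fn_vertex (hI : Q.Increasing) (hC : Q.ConvexChain) (hk : 0 < Q.k) {j : ℕ}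
    (hj : j ≤ Q.k) : Q.fn (Q.v j).1 = (Q.v j).2 := by
  rcases lt_or_eq_of_le hj with h | h
  · rw [fn_edge hI hC h (le_refl _) (le_of_lt (hI j h).1)]
    exact lin_self _ _
  · subst h
    obtain ⟨j, e1⟩ : ∃ j, Q.k = j + 1 := ⟨Q.k - 1, by omega⟩
    rw [e1]
    rw [fn_edge hI hC (j := j) (by omega) (le_of_lt (hI j (by omega)).1) (le_refl _)]
    exact lin_at_right hI (by omega)

/-- find the edge containing x, with strict right end when x < right end -/
lemma find_edge (hI : Q.Increasing) (hk : 0 < Q.k) {x : ℝ}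
    (h1 : (Q.v 0).1 ≤ x) (h2 : x < (Q.v Q.k).1) :
    ∃ j < Q.k, (Q.v j).1 ≤ x ∧ x < (Q.v (j+1)).1 := by
  by_contra hno
  push_neg at hno
  have : ∀ j ≤ Q.k, (Q.v j).1 ≤ x := by
    intro j hj
    induction j with
    | zero => exact h1
    | succ j ih =>
      have hj' : j < Q.k := by omega
      have hle := ih (by omega)
      have := hno j hj' hle
      exact this
  exact absurd (this Q.k (le_refl _)) (not_le.2 h2)

/-- point on edge j of the graph is in the segment -/
lemma graph_on_edge (hI : Q.Increasing) {j : ℕ} (hj : j < Q.k) {x : ℝ}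
    (hx1 : (Q.v j).1 ≤ x) (hx2 : x ≤ (Q.v (j+1)).1) :
    (x, lin (Q.v j) (Q.v (j+1)) x) ∈ segment ℝ (Q.v j) (Q.v (j+1)) := by
  have hlt := (hI j hj).1
  set p := Q.v j
  set q := Q.v (j+1)
  have hd : q.1 - p.1 > 0 := by dsimp [p, q]; linarith
  refine ⟨(q.1 - x) / (q.1 - p.1), (x - p.1) / (q.1 - p.1), ?_, ?_, ?_, ?_⟩
  · exact div_nonneg (by linarith) (by linarith)
  · exact div_nonneg (by linarith) (by linarith)
  · field_simp
    ring
  · have hne : q.1 - p.1 ≠ 0 := ne_of_gt hd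
    apply Prod.ext
    · simp only [Prod.fst_add, Prod.smul_fst, smul_eq_mul]
      field_simp
      ring
    · simp only [Prod.snd_add, Prod.smul_snd, smul_eq_mul]
      unfold lin
      field_simp
      ring

/-- graph point is in pts -/
lemma graph_mem (hI : Q.Increasing) (hC : Q.ConvexChain) (hk : 0 < Q.k) {x : ℝ}
    (h1 : (Q.v 0).1 ≤ x) (h2 : x ≤ (Q.v Q.k).1) : (x, Q.fn x) ∈ Q.pts := by
  rcases eq_or_lt_of_le h2 with h | h
  · subst h
    have := fn_vertex hI hC hk (le_refl Q.k)
    rw [this]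
    have hj1 : Q.k - 1 < Q.k := by omega
    have e1 : Q.k - 1 + 1 = Q.k := by omega
    apply mem_iUnion₂.2
    refine ⟨Q.k - 1, Finset.mem_range.2 hj1, ?_⟩
    rw [show Q.v Q.k = Q.v (Q.k - 1 + 1) by rw [e1]]
    exact right_mem_segment _ _ _
  · obtain ⟨j, hj, hx1, hx2⟩ := find_edge hI hk h1 h
    apply mem_iUnion₂.2
    refine ⟨j, Finset.mem_range.2 hj, ?_⟩
    rw [fn_edge hI hC hj hx1 (le_of_lt hx2)]
    exact graph_on_edge hI hj hx1 (le_of_lt hx2)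

/-- points of the chain are graph points -/
lemma pts_char (hI : Q.Increasing) (hC : Q.ConvexChain) {z : ℝ × ℝ} (hz : z ∈ Q.pts) :
    (Q.v 0).1 ≤ z.1 ∧ z.1 ≤ (Q.v Q.k).1 ∧ z.2 = Q.fn z.1 := by
  obtain ⟨j, hj', hseg⟩ := mem_iUnion₂.1 hz
  have hj := Finset.mem_range.1 hj'
  obtain ⟨a, b, ha, hb, hab, heq⟩ := hseg
  set p := Q.v j
  set q := Q.v (j+1)
  have hlt : p.1 < q.1 := (hI j hj).1
  have hz1 : z.1 = a * p.1 + b * q.1 := by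
    rw [← heq]; simp [Prod.fst_add]
  have hz2 : z.2 = a * p.2 + b * q.2 := by
    rw [← heq]; simp [Prod.snd_add]
  have e1 : a * p.1 + b * q.1 = p.1 + b * (q.1 - p.1) := by linear_combination p.1 * hab
  have e2 : a * p.1 + b * q.1 = q.1 - a * (q.1 - p.1) := by linear_combination q.1 * hab
  have hx1 : p.1 ≤ z.1 := by
    rw [hz1, e1]; linarith [mul_nonneg hb (sub_nonneg.2 hlt.le)]
  have hx2 : z.1 ≤ q.1 := by
    rw [hz1, e2]; linarith [mul_nonneg ha (sub_nonneg.2 hlt.le)]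
  refine ⟨le_trans (xle hI (Nat.zero_le _) (by omega)) hx1,
    le_trans hx2 (xle hI (by omega) (by omega)), ?_⟩
  rw [fn_edge hI hC hj hx1 hx2]
  unfold lin
  have hne : q.1 - p.1 ≠ 0 := by linarith
  have hm : (q.2 - p.2) / (q.1 - p.1) * (q.1 - p.1) = q.2 - p.2 :=
    div_mul_cancel₀ _ hne
  rw [hz2, hz1, e1]
  calc a * p.2 + b * q.2 = p.2 + b * (q.2 - p.2) := by linear_combination p.2 * hab
    _ = p.2 + (q.2 - p.2) / (q.1 - p.1) * (p.1 + b * (q.1 - p.1) - p.1) := by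
        rw [show p.1 + b * (q.1 - p.1) - p.1 = b * (q.1 - p.1) by ring,
          show (q.2 - p.2) / (q.1 - p.1) * (b * (q.1 - p.1))
            = b * ((q.2 - p.2) / (q.1 - p.1) * (q.1 - p.1)) by ring, hm]

/-- fn is monotone -/
lemma fn_monotone (hI : Q.Increasing) (hk : 0 < Q.k) : Monotone Q.fn := by
  intro x y hxy
  have hne : (Finset.range Q.k).Nonempty := ⟨0, Finset.mem_range.2 hk⟩
  unfold fn
  rw [dif_pos hne, dif_pos hne]
  apply Finset.sup'_le
  intro i hi
  refine le_trans ?_ (Finset.le_sup' _ hi)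
  show lin (Q.v i) (Q.v (i+1)) x ≤ lin (Q.v i) (Q.v (i+1)) y
  unfold lin
  have := sl_nonneg hI (Finset.mem_range.1 hi)
  unfold sl at this
  nlinarith

/-- sup' of continuous functions is continuous -/
lemma cont_sup' {ι : Type*} (s : Finset ι) (hs : s.Nonempty) (f : ι → ℝ → ℝ)
    (hf : ∀ i, Continuous (f i)) :
    Continuous fun x => s.sup' hs fun i => f i x := by
  induction hs using Finset.Nonempty.cons_induction with
  | singleton a => simpa using hf a
  | cons a t ha ht ih =>
    have he : (fun x => (Finset.cons a t ha).sup' (Finset.cons_nonempty ha) fun i => f i x)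
        = fun x => (f a x) ⊔ (t.sup' ht fun i => f i x) := by
      funext x; exact Finset.sup'_cons ht _
    rw [he]
    exact Continuous.max (hf a) ih

/-- sup' of convex functions is convex -/
lemma convexOn_sup' {ι : Type*} (s : Finset ι) (hs : s.Nonempty) (f : ι → ℝ → ℝ)
    (hf : ∀ i, ConvexOn ℝ univ (f i)) :
    ConvexOn ℝ univ fun x => s.sup' hs fun i => f i x := by
  induction hs using Finset.Nonempty.cons_induction with
  | singleton a => simpa using hf a
  | cons a t ha ht ih =>
    have he : (fun x => (Finset.cons a t ha).sup' (Finset.cons_nonempty ha) fun i => f i x)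
        = fun x => (f a x) ⊔ (t.sup' ht fun i => f i x) := by
      funext x; exact Finset.sup'_cons ht _
    rw [he]
    exact ConvexOn.sup (hf a) ih

lemma lin_convexOn (p q : ℝ × ℝ) : ConvexOn ℝ univ (lin p q) := by
  refine ⟨convex_univ, ?_⟩
  intro x _ y _ a b ha hb hab
  apply le_of_eq
  simp only [smul_eq_mul]
  unfold lin
  linear_combination ((q.2 - p.2) / (q.1 - p.1) * p.1 - p.2) * hab

/-- fn is continuous -/
lemma fn_continuous (hk : 0 < Q.k) : Continuous Q.fn := by
  have hne : (Finset.range Q.k).Nonempty := ⟨0, Finset.mem_range.2 hk⟩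
  have he : Q.fn = fun x => (Finset.range Q.k).sup' hne
      (fun i => lin (Q.v i) (Q.v (i+1)) x) := by
    funext x; unfold fn; rw [dif_pos hne]
  rw [he]
  apply cont_sup'
  intro i
  unfold lin; continuity

/-- fn is convex -/
lemma fn_convexOn (hk : 0 < Q.k) : ConvexOn ℝ univ Q.fn := by
  have hne : (Finset.range Q.k).Nonempty := ⟨0, Finset.mem_range.2 hk⟩
  have he : Q.fn = fun x => (Finset.range Q.k).sup' hne
      (fun i => lin (Q.v i) (Q.v (i+1)) x) := by
    funext x; unfold fn; rw [dif_pos hne]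
  rw [he]
  exact convexOn_sup' _ _ _ (fun i => lin_convexOn _ _)

/-- vertices belong to pts -/
lemma vertex_mem (hk : 0 < Q.k) {j : ℕ} (hj : j ≤ Q.k) : Q.v j ∈ Q.pts := by
  rcases lt_or_eq_of_le hj with h | h
  · exact mem_iUnion₂.2 ⟨j, Finset.mem_range.2 h, left_mem_segment _ _ _⟩
  · subst h
    refine mem_iUnion₂.2 ⟨Q.k - 1, Finset.mem_range.2 (by omega), ?_⟩
    rw [show Q.v Q.k = Q.v (Q.k - 1 + 1) by congr 1; omega]
    exact right_mem_segment _ _ _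

/-- pts is compact -/
lemma pts_compact (Q : PolyChain) : IsCompact Q.pts := by
  apply Finset.isCompact_biUnion
  intro i _
  rw [segment_eq_image]
  exact (isCompact_Icc.image (by continuity))

end PolyChain
namespace DL

lemma abel (s φ : ℕ → ℝ) (n : ℕ) :
    ∑ i ∈ Finset.range (n+1), s i * (φ (i+1) - φ i)
      = s n * φ (n+1) - s 0 * φ 0 - ∑ i ∈ Finset.range n, (s (i+1) - s i) * φ (i+1) := by
  induction n with
  | zero => simp; ring
  | succ n ih =>
    rw [Finset.sum_range_succ, ih, Finset.sum_range_succ]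
    ring

lemma sqrt_pos_of {a b : ℝ} (ha : 0 < a) : 0 < Real.sqrt (a^2 + b^2) := by
  apply Real.sqrt_pos.2; nlinarith

/-- Cauchy-Schwarz style bound -/
lemma cs_le {dx dF dH : ℝ} (hdx : 0 < dx) :
    dx^2 + dF * dH ≤ Real.sqrt (dx^2 + dF^2) * Real.sqrt (dx^2 + dH^2) := by
  have h1 : dx^2 + dF * dH ≤ |dx^2 + dF * dH| := le_abs_self _
  have h2 : |dx^2 + dF * dH| = Real.sqrt ((dx^2 + dF * dH)^2) := (Real.sqrt_sq_eq_abs _).symm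
  have h3 : (dx^2 + dF * dH)^2 ≤ (dx^2 + dF^2) * (dx^2 + dH^2) := by nlinarith [sq_nonneg (dF - dH), sq_nonneg dx, sq_nonneg (dx*(dF-dH))]
  calc dx^2 + dF * dH ≤ Real.sqrt ((dx^2 + dF * dH)^2) := by rw [← h2]; exact h1
    _ ≤ Real.sqrt ((dx^2 + dF^2) * (dx^2 + dH^2)) := Real.sqrt_le_sqrt h3
    _ = _ := Real.sqrt_mul (by positivity) _

lemma cs_lt {dx dF dH : ℝ} (hdx : 0 < dx) (hne : dF ≠ dH) :
    dx^2 + dF * dH < Real.sqrt (dx^2 + dF^2) * Real.sqrt (dx^2 + dH^2) := by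
  have h1 : dx^2 + dF * dH ≤ |dx^2 + dF * dH| := le_abs_self _
  have h2 : |dx^2 + dF * dH| = Real.sqrt ((dx^2 + dF * dH)^2) := (Real.sqrt_sq_eq_abs _).symm
  have hd : 0 < (dF - dH)^2 := by
    have h := sub_ne_zero.2 hne
    positivity
  have h3 : (dx^2 + dF * dH)^2 < (dx^2 + dF^2) * (dx^2 + dH^2) := by
    nlinarith [mul_pos (pow_pos hdx 2) hd]
  calc dx^2 + dF * dH ≤ Real.sqrt ((dx^2 + dF * dH)^2) := by rw [← h2]; exact h1
    _ < Real.sqrt ((dx^2 + dF^2) * (dx^2 + dH^2)) := Real.sqrt_lt_sqrt (by positivity) h3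
    _ = _ := Real.sqrt_mul (by positivity) _

/-- monotonicity of sine of slope angle -/
lemma sin_mono {dx1 dH1 dx2 dH2 : ℝ} (h1 : 0 < dx1) (h2 : 0 < dx2)
    (hH1 : 0 ≤ dH1) (hH2 : 0 ≤ dH2) (hsl : dH1 / dx1 ≤ dH2 / dx2) :
    dH1 / Real.sqrt (dx1^2 + dH1^2) ≤ dH2 / Real.sqrt (dx2^2 + dH2^2) := by
  have hL1 := sqrt_pos_of (b := dH1) h1
  have hL2 := sqrt_pos_of (b := dH2) h2
  rw [div_le_div_iff₀ hL1 hL2]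
  have hcross : dH1 * dx2 ≤ dH2 * dx1 := by
    rw [div_le_div_iff₀ h1 h2] at hsl; linarith
  have e1 : dH1 * Real.sqrt (dx2^2 + dH2^2) = Real.sqrt (dH1^2 * (dx2^2 + dH2^2)) := by
    rw [Real.sqrt_mul (by positivity), Real.sqrt_sq hH1]
  have e2 : dH2 * Real.sqrt (dx1^2 + dH1^2) = Real.sqrt (dH2^2 * (dx1^2 + dH1^2)) := by
    rw [Real.sqrt_mul (by positivity), Real.sqrt_sq hH2]
  rw [e1, e2]
  apply Real.sqrt_le_sqrt
  nlinarith [mul_nonneg (mul_nonneg hH1 h2.le) (mul_nonneg hH2 h1.le), sq_nonneg (dH1*dx2), sq_nonneg (dH2*dx1), mul_self_le_mul_self (mul_nonneg hH1 h2.le) hcross]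

theorem discrete_len {n : ℕ} (hn : 0 < n) (x F H : ℕ → ℝ)
    (hx : ∀ i < n, x i < x (i+1))
    (hHm : ∀ i < n, H i ≤ H (i+1))
    (hsl : ∀ i, i + 1 < n →
      (H (i+1) - H i) / (x (i+1) - x i) ≤ (H (i+2) - H (i+1)) / (x (i+2) - x (i+1)))
    (hle : ∀ i ≤ n, F i ≤ H i)
    (h0 : F 0 = H 0) (hnn : F n = H n)
    (hstr : ∃ j ≤ n, F j < H j) :
    ∑ i ∈ Finset.range n, eudist (x i, H i) (x (i+1), H (i+1))
      < ∑ i ∈ Finset.range n, eudist (x i, F i) (x (i+1), F (i+1)) := by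
  set dx : ℕ → ℝ := fun i => x (i+1) - x i with hdx
  set dF : ℕ → ℝ := fun i => F (i+1) - F i with hdF
  set dH : ℕ → ℝ := fun i => H (i+1) - H i with hdH
  set L : ℕ → ℝ := fun i => Real.sqrt ((dx i)^2 + (dH i)^2) with hL
  set s : ℕ → ℝ := fun i => dH i / L i with hs
  set g : ℕ → ℝ := fun i => ((dx i)^2 + dF i * dH i) / L i with hg
  set φ : ℕ → ℝ := fun i => F i - H i with hφ
  have hdxp : ∀ i < n, 0 < dx i := fun i hi => by simp [hdx]; linarith [hx i hi]
  have hLp : ∀ i < n, 0 < L i := fun i hi => sqrt_pos_of (hdxp i hi)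
  have hEH : ∀ i < n, eudist (x i, H i) (x (i+1), H (i+1)) = L i := by
    intro i hi; rfl
  have hEF : ∀ i < n, eudist (x i, F i) (x (i+1), F (i+1))
      = Real.sqrt ((dx i)^2 + (dF i)^2) := by
    intro i hi; rfl
  -- existence of an index with dF ≠ dH
  have hex : ∃ i0, i0 < n ∧ dF i0 ≠ dH i0 := by
    by_contra hcon
    push_neg at hcon
    have hall : ∀ i ≤ n, F i = H i := by
      intro i hi
      induction i with
      | zero => exact h0
      | succ i ih =>
        have h1 := ih (by omega)
        have h2 := hcon i (by omega)
        have : F (i+1) - F i = H (i+1) - H i := h2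
        linarith
    obtain ⟨j, hj, hjs⟩ := hstr
    exact absurd (hall j hj) (ne_of_lt hjs)
  obtain ⟨i0, hi0, hne0⟩ := hex
  -- g i ≤ F-length i, strict at i0
  have hgle : ∀ i < n, g i ≤ Real.sqrt ((dx i)^2 + (dF i)^2) := by
    intro i hi
    rw [hg, div_le_iff₀ (hLp i hi)]
    exact cs_le (hdxp i hi)
  have hglt : g i0 < Real.sqrt ((dx i0)^2 + (dF i0)^2) := by
    rw [hg, div_lt_iff₀ (hLp i0 hi0)]
    exact cs_lt (hdxp i0 hi0) hne0
  -- H-length i = g i - s i * (φ (i+1) - φ i)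
  have hHg : ∀ i < n, L i = g i - s i * (φ (i+1) - φ i) := by
    intro i hi
    have hLi := hLp i hi
    have hsq : L i * L i = (dx i)^2 + (dH i)^2 := Real.mul_self_sqrt (by positivity)
    have : φ (i+1) - φ i = dF i - dH i := by simp [hφ, hdF, hdH]; ring
    rw [this, hs, hg]
    field_simp
    nlinarith [hsq]
  -- sum identities
  have hsum1 : ∑ i ∈ Finset.range n, eudist (x i, H i) (x (i+1), H (i+1))
      = ∑ i ∈ Finset.range n, (g i - s i * (φ (i+1) - φ i)) := by
    apply Finset.sum_congr rfl
    intro i hi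
    rw [hEH i (Finset.mem_range.1 hi), hHg i (Finset.mem_range.1 hi)]
  -- Abel: A ≥ 0
  obtain ⟨m, rfl⟩ : ∃ m, n = m + 1 := ⟨n - 1, by omega⟩
  have hA : 0 ≤ ∑ i ∈ Finset.range (m+1), s i * (φ (i+1) - φ i) := by
    rw [abel]
    have hφ0 : φ 0 = 0 := by simp [hφ, h0]
    have hφn : φ (m+1) = 0 := by simp [hφ]; linarith [hnn]
    rw [hφ0, hφn]
    simp only [mul_zero, zero_sub, sub_zero, neg_sub, zero_mul]
    have : ∀ i ∈ Finset.range m, (s (i+1) - s i) * φ (i+1) ≤ 0 := by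
      intro i hi
      have him := Finset.mem_range.1 hi
      have hsm : s i ≤ s (i+1) := by
        apply sin_mono (hdxp i (by omega)) (hdxp (i+1) (by omega))
          (by simp [hdH]; linarith [hHm i (by omega)])
          (by simp [hdH]; linarith [hHm (i+1) (by omega)])
        exact hsl i (by omega)
      have hφle : φ (i+1) ≤ 0 := by
        simp only [hφ]
        have := hle (i+1) (by omega)
        linarith
      exact mul_nonpos_of_nonneg_of_nonpos (by linarith) hφle
    have := Finset.sum_nonpos this
    linarith [this]
  -- conclude
  have hs1 : ∑ i ∈ Finset.range (m+1), (g i - s i * (φ (i+1) - φ i))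
      ≤ ∑ i ∈ Finset.range (m+1), g i := by
    rw [Finset.sum_sub_distrib]
    linarith [hA]
  have hs2 : ∑ i ∈ Finset.range (m+1), g i
      < ∑ i ∈ Finset.range (m+1), eudist (x i, F i) (x (i+1), F (i+1)) := by
    apply Finset.sum_lt_sum
    · intro i hi
      rw [hEF i (Finset.mem_range.1 hi)]
      exact hgle i (Finset.mem_range.1 hi)
    · exact ⟨i0, Finset.mem_range.2 hi0, by rw [hEF i0 hi0]; exact hglt⟩
  rw [hsum1]
  linarith

end DL

namespace PolyChain
variable {Q : PolyChain}

lemma slope_to_cross {x1 y1 x2 y2 x3 y3 : ℝ} (h12 : x1 < x2) (h23 : x2 < x3)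
    (hs : (y2 - y1) / (x2 - x1) ≤ (y3 - y2) / (x3 - x2)) :
    (x3 - x1) * (y2 - y1) - (y3 - y1) * (x2 - x1) ≤ 0 := by
  rw [div_le_div_iff₀ (by linarith) (by linarith)] at hs
  nlinarith

/-- a segment between two graph points with no vertex strictly between
is contained in the chain -/
lemma sub_edge (hI : Q.Increasing) (hC : Q.ConvexChain) (hk : 0 < Q.k)
    {u w : ℝ} (huw : u < w) (h1 : (Q.v 0).1 ≤ u) (h2 : w ≤ (Q.v Q.k).1)
    (hno : ∀ j ≤ Q.k, (Q.v j).1 ∉ Ioo u w) :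
    segment ℝ (u, Q.fn u) (w, Q.fn w) ⊆ Q.pts := by
  have huck : u < (Q.v Q.k).1 := lt_of_lt_of_le huw h2
  obtain ⟨j, hj, hju, hju'⟩ := find_edge hI hk h1 huck
  have hw : w ≤ (Q.v (j+1)).1 := by
    by_contra hcon
    push_neg at hcon
    exact hno (j+1) (by omega) ⟨hju', hcon⟩
  have hmu : (u, Q.fn u) ∈ segment ℝ (Q.v j) (Q.v (j+1)) := by
    rw [fn_edge hI hC hj hju (by linarith [(hI j hj).1])]
    exact graph_on_edge hI hj hju (by linarith)
  have hmw : (w, Q.fn w) ∈ segment ℝ (Q.v j) (Q.v (j+1)) := by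
    rw [fn_edge hI hC hj (by linarith) hw]
    exact graph_on_edge hI hj (by linarith) hw
  intro z hz
  apply mem_iUnion₂.2
  exact ⟨j, Finset.mem_range.2 hj, (convex_segment _ _).segment_subset hmu hmw hz⟩

/-- distance between two graph points on the same edge -/
lemma eudist_on_edge (hI : Q.Increasing) (hC : Q.ConvexChain) {j : ℕ} (hj : j < Q.k)
    {u w : ℝ} (huw : u ≤ w) (h1 : (Q.v j).1 ≤ u) (h2 : w ≤ (Q.v (j+1)).1) :
    eudist (u, Q.fn u) (w, Q.fn w) = (w - u) * Real.sqrt (1 + (Q.sl j)^2) := by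
  have hfu : Q.fn u = lin (Q.v j) (Q.v (j+1)) u := fn_edge hI hC hj h1 (by linarith)
  have hfw : Q.fn w = lin (Q.v j) (Q.v (j+1)) w := fn_edge hI hC hj (by linarith) h2
  have hdf : Q.fn w - Q.fn u = Q.sl j * (w - u) := by
    rw [hfu, hfw]; unfold lin sl; ring
  unfold eudist
  simp only
  rw [hdf]
  have : (w - u)^2 + (Q.sl j * (w - u))^2 = (w - u)^2 * (1 + (Q.sl j)^2) := by ring
  rw [this, Real.sqrt_mul (sq_nonneg _), Real.sqrt_sq (by linarith)]

/-- the vertex distance -/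
lemma eudist_vertex (hI : Q.Increasing) (hC : Q.ConvexChain) (hk : 0 < Q.k)
    {j : ℕ} (hj : j < Q.k) :
    eudist (Q.v j) (Q.v (j+1))
      = ((Q.v (j+1)).1 - (Q.v j).1) * Real.sqrt (1 + (Q.sl j)^2) := by
  have e1 : Q.v j = ((Q.v j).1, Q.fn (Q.v j).1) := by
    rw [fn_vertex hI hC hk (by omega)]
  have e2 : Q.v (j+1) = ((Q.v (j+1)).1, Q.fn (Q.v (j+1)).1) := by
    rw [fn_vertex hI hC hk (by omega)]
  calc eudist (Q.v j) (Q.v (j+1))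
      = eudist ((Q.v j).1, Q.fn (Q.v j).1) ((Q.v (j+1)).1, Q.fn (Q.v (j+1)).1) := by
        rw [← e1, ← e2]
    _ = _ := eudist_on_edge hI hC hj (le_of_lt (hI j hj).1) (le_refl _) (le_refl _)

/-- telescoping sum over Ico -/
lemma tele (g : ℕ → ℝ) {a b : ℕ} (hab : a ≤ b) :
    ∑ i ∈ Finset.Ico a b, (g (i+1) - g i) = g b - g a := by
  rw [Finset.sum_Ico_eq_sub _ hab, Finset.sum_range_sub, Finset.sum_range_sub]
  ring

/-- refinement: length of chain equals sum over a refined grid -/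
lemma length_refine (hI : Q.Increasing) (hC : Q.ConvexChain) (hk : 0 < Q.k)
    {n : ℕ} (ξ : ℕ → ℝ) (hn : 2 ≤ n)
    (hlt : ∀ i j, i < j → j < n → ξ i < ξ j)
    (hbound : ∀ i < n, (Q.v 0).1 ≤ ξ i ∧ ξ i ≤ (Q.v Q.k).1)
    (hvert : ∀ j ≤ Q.k, ∃ i < n, ξ i = (Q.v j).1) :
    Q.length = ∑ i ∈ Finset.range (n-1),
      eudist (ξ i, Q.fn (ξ i)) (ξ (i+1), Q.fn (ξ (i+1))) := by
  have hreflect : ∀ i j, i < n → j < n → ξ i < ξ j → i < j := by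
    intro i j hi hj hij
    by_contra hcon
    push_neg at hcon
    rcases eq_or_lt_of_le hcon with h | h
    · subst h; exact lt_irrefl _ hij
    · exact absurd (hlt j i h hi) (not_lt.2 (le_of_lt hij))
  have hmono : ∀ i j, i ≤ j → j < n → ξ i ≤ ξ j := by
    intro i j hij hj
    rcases eq_or_lt_of_le hij with h | h
    · subst h; exact le_refl _
    · exact le_of_lt (hlt i j h hj)
  -- edge assignment
  have hexists : ∀ i, i < n - 1 → ∃ j, j < Q.k ∧ (Q.v j).1 ≤ ξ i ∧ ξ (i+1) ≤ (Q.v (j+1)).1 := by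
    intro i hi
    have hin : i < n := by omega
    have hin1 : i + 1 < n := by omega
    have hik : ξ i < (Q.v Q.k).1 :=
      lt_of_lt_of_le (hlt i (i+1) (by omega) hin1) (hbound (i+1) hin1).2
    obtain ⟨j, hj, h1, h2⟩ := find_edge hI hk (hbound i hin).1 hik
    refine ⟨j, hj, h1, ?_⟩
    by_contra hcon
    push_neg at hcon
    obtain ⟨l, hl, hle⟩ := hvert (j+1) (by omega)
    have : i < l ∧ l < i + 1 := by
      constructor
      · exact hreflect i l hin hl (by rw [hle]; exact h2)
      · exact hreflect l (i+1) hl hin1 (by rw [hle]; exact hcon)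
    omega
  have huniq : ∀ i, i < n - 1 → ∀ j j', j < Q.k → j' < Q.k →
      (Q.v j).1 ≤ ξ i → ξ (i+1) ≤ (Q.v (j+1)).1 →
      (Q.v j').1 ≤ ξ i → ξ (i+1) ≤ (Q.v (j'+1)).1 → j = j' := by
    intro i hi j j' hj hj' ha hb ha' hb'
    have hii : ξ i < ξ (i+1) := hlt i (i+1) (by omega) (by omega)
    have h1 : (Q.v j).1 < (Q.v (j'+1)).1 := by linarith
    have h2 : (Q.v j').1 < (Q.v (j+1)).1 := by linarith
    have hr1 : j < j' + 1 := by
      by_contra hcon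
      push_neg at hcon
      exact absurd (xle hI hcon (by omega)) (not_le.2 h1)
    have hr2 : j' < j + 1 := by
      by_contra hcon
      push_neg at hcon
      exact absurd (xle hI hcon (by omega)) (not_le.2 h2)
    omega
  classical
  set β : ℕ → ℕ := fun i => if hi : i < n - 1 then (hexists i hi).choose else 0 with hβ
  have hβspec : ∀ i, (hi : i < n - 1) → β i < Q.k ∧ (Q.v (β i)).1 ≤ ξ i ∧ ξ (i+1) ≤ (Q.v (β i + 1)).1 := by
    intro i hi
    simp only [hβ, dif_pos hi]
    exact (hexists i hi).choose_spec
  -- vertex indices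
  set idx : ℕ → ℕ := fun j => if hj : j ≤ Q.k then (hvert j hj).choose else 0 with hidx
  have hidxspec : ∀ j, (hj : j ≤ Q.k) → idx j < n ∧ ξ (idx j) = (Q.v j).1 := by
    intro j hj
    simp only [hidx, dif_pos hj]
    obtain ⟨h1, h2⟩ := (hvert j hj).choose_spec
    exact ⟨h1, h2⟩
  -- fibers
  have hfiber : ∀ j < Q.k, Finset.filter (fun i => β i = j) (Finset.range (n-1))
      = Finset.Ico (idx j) (idx (j+1)) := by
    intro j hj
    ext i
    simp only [Finset.mem_filter, Finset.mem_range, Finset.mem_Ico]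
    have hidj := hidxspec j (by omega)
    have hidj1 := hidxspec (j+1) (by omega)
    constructor
    · rintro ⟨hi, hbi⟩
      obtain ⟨hb1, hb2, hb3⟩ := hβspec i hi
      rw [hbi] at hb2 hb3
      constructor
      · by_contra hcon
        push_neg at hcon
        have : ξ i < ξ (idx j) := hlt i (idx j) hcon hidj.1
        rw [hidj.2] at this
        linarith
      · have : ξ (i + 1) ≤ ξ (idx (j+1)) := by rw [hidj1.2]; exact hb3
        by_contra hcon
        push_neg at hcon
        have h2 : ξ (idx (j+1)) < ξ (i+1) := by
          apply hlt _ _ _ (by omega)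
          omega
        linarith
    · rintro ⟨h1, h2⟩
      have hi : i < n - 1 := by
        have := hidj1.1; omega
      refine ⟨hi, ?_⟩
      obtain ⟨hb1, hb2, hb3⟩ := hβspec i hi
      apply huniq i hi _ _ hb1 hj hb2 hb3
      · rw [← hidj.2]; exact hmono _ _ h1 (by omega)
      · rw [← hidj1.2]; exact hmono _ _ (by omega) hidj1.1
  -- compute
  have hterm : ∀ i ∈ Finset.range (n-1),
      eudist (ξ i, Q.fn (ξ i)) (ξ (i+1), Q.fn (ξ (i+1)))
        = (ξ (i+1) - ξ i) * Real.sqrt (1 + (Q.sl (β i))^2) := by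
    intro i hi
    have hi' := Finset.mem_range.1 hi
    obtain ⟨hb1, hb2, hb3⟩ := hβspec i hi'
    exact eudist_on_edge hI hC hb1 (le_of_lt (hlt i (i+1) (by omega) (by omega))) hb2 hb3
  rw [Finset.sum_congr rfl hterm]
  have hmaps : ∀ i ∈ Finset.range (n-1), β i ∈ Finset.range Q.k := by
    intro i hi
    exact Finset.mem_range.2 (hβspec i (Finset.mem_range.1 hi)).1
  rw [← Finset.sum_fiberwise_of_maps_to hmaps]
  unfold length
  apply Finset.sum_congr rfl
  intro j hj'
  have hj := Finset.mem_range.1 hj'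
  have hsum : ∑ i ∈ Finset.filter (fun i => β i = j) (Finset.range (n-1)),
      (ξ (i+1) - ξ i) * Real.sqrt (1 + (Q.sl (β i))^2)
      = ∑ i ∈ Finset.Ico (idx j) (idx (j+1)),
      (ξ (i+1) - ξ i) * Real.sqrt (1 + (Q.sl j)^2) := by
    rw [← hfiber j hj]
    apply Finset.sum_congr rfl
    intro i hi
    have := (Finset.mem_filter.1 hi).2
    rw [this]
  rw [hsum, ← Finset.sum_mul, tele]
  · have hidj := hidxspec j (by omega)
    have hidj1 := hidxspec (j+1) (by omega)
    rw [hidj.2, hidj1.2, eudist_vertex hI hC hk hj]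
  · -- idx j ≤ idx (j+1)
    have hidj := hidxspec j (by omega)
    have hidj1 := hidxspec (j+1) (by omega)
    apply le_of_lt
    apply hreflect _ _ hidj.1 hidj1.1
    rw [hidj.2, hidj1.2]
    exact (hI j hj).1

end PolyChain


open PolyChain DL

/-- A closed axis-aligned rectangle given by its lower-left / upper-right corners. -/
def rect (o : (ℝ × ℝ) × (ℝ × ℝ)) : Set (ℝ × ℝ) := Set.Icc o.1 o.2

/-- The chain avoids the open interior of every obstacle rectangle. -/
def CollisionFree (P : PolyChain) (O : Finset ((ℝ × ℝ) × (ℝ × ℝ))) : Prop :=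
  ∀ o ∈ O, Disjoint P.pts (interior (rect o))

/-- A collision-free increasing convex polygonal chain from `Y` to `T`. -/
def CICP (Y T : ℝ × ℝ) (O : Finset ((ℝ × ℝ) × (ℝ × ℝ))) (P : PolyChain) : Prop :=
  P.Increasing ∧ P.ConvexChain ∧ P.v 0 = Y ∧ P.v P.k = T ∧ CollisionFree P O

/-- Chain `P₁` crosses `P₂` (both ending at `T`) if they have a common point
`C ≠ T` immediately to the right of which `P₁` goes strictly below `P₂`. -/
def Crosses (P₁ P₂ : PolyChain) (T : ℝ × ℝ) : Prop :=
  ∃ C ∈ P₁.pts ∩ P₂.pts, C ≠ T ∧ ∃ ε > 0,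
    ∀ p ∈ P₁.pts, ∀ q ∈ P₂.pts,
      p.1 = q.1 → C.1 < p.1 → p.1 < C.1 + ε → p.2 < q.2

set_option maxHeartbeats 2000000

/-- A minimum-length CICP `P*(Y)` from `Y` to `T` never crosses any CICP from
another take-off point `Y'` to `T`. -/
theorem stmt2 (O : Finset ((ℝ × ℝ) × (ℝ × ℝ))) (Y Y' T : ℝ × ℝ)
    (hline : Y.2 = Y'.2) (hT : Y.2 < T.2)
    (Pstar P : PolyChain)
    (hPstar : CICP Y T O Pstar)
    (hmin : ∀ P', CICP Y T O P' → Pstar.length ≤ P'.length)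
    (hP : CICP Y' T O P) :
    ¬ Crosses Pstar P T := by
  rintro ⟨C, ⟨hCm1, hCm2⟩, hCT, ε, hε, hcross⟩
  obtain ⟨hI, hCx, hv0, hvk, hCF⟩ := hPstar
  obtain ⟨hI', hCx', hv0', hvk', hCF'⟩ := hP
  -- nondegeneracy
  have hk : 0 < Pstar.k := by
    rcases Nat.eq_zero_or_pos Pstar.k with h | h
    · exfalso
      have : Y = T := by rw [← hv0, ← hvk, h]
      rw [this] at hT; exact lt_irrefl _ hT
    · exact h
  have hk' : 0 < P.k := by
    rcases Nat.eq_zero_or_pos P.k with h | h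
    · exfalso
      have : Y' = T := by rw [← hv0', ← hvk', h]
      rw [this] at hline
      rw [hline] at hT; exact lt_irrefl _ hT
    · exact h
  -- endpoint coordinates
  have hx0 : (Pstar.v 0).1 = Y.1 := by rw [hv0]
  have hxk : (Pstar.v Pstar.k).1 = T.1 := by rw [hvk]
  have hx0' : (P.v 0).1 = Y'.1 := by rw [hv0']
  have hxk' : (P.v P.k).1 = T.1 := by rw [hvk']
  have hFY : Pstar.fn Y.1 = Y.2 := by
    rw [← hx0, fn_vertex hI hCx hk (by omega), hv0]
  have hFT : Pstar.fn T.1 = T.2 := by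
    rw [← hxk, fn_vertex hI hCx hk (le_refl _), hvk]
  have hGT : P.fn T.1 = T.2 := by
    rw [← hxk', fn_vertex hI' hCx' hk' (le_refl _), hvk']
  -- C facts
  obtain ⟨hCa, hCb, hCc⟩ := pts_char hI hCx hCm1
  rw [hx0] at hCa; rw [hxk] at hCb
  obtain ⟨hCa', hCb', hCc'⟩ := pts_char hI' hCx' hCm2
  rw [hx0'] at hCa'; rw [hxk'] at hCb'
  have hCltT : C.1 < T.1 := by
    rcases eq_or_lt_of_le hCb with h | h
    · exfalso
      apply hCT
      have : C.2 = T.2 := by rw [hCc, h, hFT]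
      exact Prod.ext h this
    · exact h
  -- window size
  set ε0 := min ε (T.1 - C.1) with hε0def
  have hε0 : 0 < ε0 := lt_min hε (by linarith)
  have hε0a : ε0 ≤ ε := min_le_left _ _
  have hε0b : ε0 ≤ T.1 - C.1 := min_le_right _ _
  -- crossing consequence
  have hbelow : ∀ z, C.1 < z → z < C.1 + ε → z ≤ T.1 → Pstar.fn z < P.fn z := by
    intro z h1 h2 h3
    have hmF : (z, Pstar.fn z) ∈ Pstar.pts := by
      apply graph_mem hI hCx hk
      · rw [hx0]; linarith
      · rw [hxk]; exact h3
    have hmG : (z, P.fn z) ∈ P.pts := by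
      apply graph_mem hI' hCx' hk'
      · rw [hx0']; linarith
      · rw [hxk']; exact h3
    exact hcross (z, Pstar.fn z) hmF (z, P.fn z) hmG rfl h1 h2
  -- the set S and next common point C'
  set S := (Pstar.pts ∩ P.pts) ∩ {z : ℝ × ℝ | C.1 + ε0/2 ≤ z.1} with hSdef
  have hScpt : IsCompact S := by
    apply IsCompact.inter_right
    · exact (pts_compact Pstar).inter_right (pts_compact P).isClosed
    · exact isClosed_le continuous_const continuous_fst
  have hTS : T ∈ S := by
    refine ⟨⟨?_, ?_⟩, ?_⟩
    · rw [← hvk]; exact vertex_mem hk (le_refl _)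
    · rw [← hvk']; exact vertex_mem hk' (le_refl _)
    · show C.1 + ε0/2 ≤ T.1; linarith
  obtain ⟨C', hC'S, hC'min⟩ := hScpt.exists_isMinOn ⟨T, hTS⟩ continuous_fst.continuousOn
  have hC'lo : C.1 + ε0/2 ≤ C'.1 := hC'S.2
  obtain ⟨hC'a, hC'b, hC'c⟩ := pts_char hI hCx hC'S.1.1
  rw [hx0] at hC'a; rw [hxk] at hC'b
  obtain ⟨hC'a', hC'b', hC'c'⟩ := pts_char hI' hCx' hC'S.1.2
  rw [hx0'] at hC'a'
  -- no common point strictly between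
  have hnc : ∀ z, C.1 < z → z < C'.1 → Pstar.fn z ≠ P.fn z := by
    intro z h1 h2 heq
    have hzT : z ≤ T.1 := le_trans (le_of_lt h2) hC'b
    have hmF : (z, Pstar.fn z) ∈ Pstar.pts := by
      apply graph_mem hI hCx hk
      · rw [hx0]; linarith
      · rw [hxk]; exact hzT
    have hmG : (z, Pstar.fn z) ∈ P.pts := by
      rw [heq]
      apply graph_mem hI' hCx' hk'
      · rw [hx0']; linarith
      · rw [hxk']; exact hzT
    rcases lt_or_ge z (C.1 + ε) with h | h
    · exact lt_irrefl _ (hcross (z, Pstar.fn z) hmF (z, Pstar.fn z) hmG rfl h1 h)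
    · have hzS : (z, Pstar.fn z) ∈ S := ⟨⟨hmF, hmG⟩, by show C.1 + ε0/2 ≤ z; linarith⟩
      have := hC'min hzS
      simp only [Set.mem_setOf_eq] at this
      change C'.1 ≤ z at this
      linarith
  -- x* strictly inside
  set xst := C.1 + ε0/4 with hxstdef
  have hxst1 : C.1 < xst := by rw [hxstdef]; linarith
  have hxst2 : xst < C.1 + ε := by rw [hxstdef]; linarith
  have hxst3 : xst < C'.1 := by rw [hxstdef]; linarith
  have hxstT : xst ≤ T.1 := le_trans (le_of_lt hxst3) hC'b
  have hxstlt : Pstar.fn xst < P.fn xst := hbelow xst hxst1 hxst2 hxstT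
  -- strict separation on the open interval
  have hFG : ∀ z, C.1 < z → z < C'.1 → Pstar.fn z < P.fn z := by
    intro z h1 h2
    rcases lt_trichotomy (Pstar.fn z) (P.fn z) with h | h | h
    · exact h
    · exact absurd h (hnc z h1 h2)
    · exfalso
      have hDc : ContinuousOn (fun t => P.fn t - Pstar.fn t) (Icc (min xst z) (max xst z)) :=
        ((fn_continuous hk').sub (fn_continuous hk)).continuousOn
      rcases lt_trichotomy xst z with ho | ho | ho
      · have hsub := intermediate_value_Icc' (le_of_lt ho)
          (((fn_continuous hk').sub (fn_continuous hk)).continuousOn)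
        have h0m : (0:ℝ) ∈ Icc (P.fn z - Pstar.fn z) (P.fn xst - Pstar.fn xst) :=
          ⟨by linarith, by linarith⟩
        obtain ⟨w, hw, hDw⟩ := hsub h0m
        have : Pstar.fn w = P.fn w := by
          have : P.fn w - Pstar.fn w = 0 := hDw
          linarith
        exact hnc w (lt_of_lt_of_le hxst1 hw.1) (lt_of_le_of_lt hw.2 h2) this
      · rw [ho] at hxstlt; linarith
      · have hsub := intermediate_value_Icc (le_of_lt ho)
          (((fn_continuous hk').sub (fn_continuous hk)).continuousOn)
        have h0m : (0:ℝ) ∈ Icc (P.fn z - Pstar.fn z) (P.fn xst - Pstar.fn xst) :=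
          ⟨by linarith, by linarith⟩
        obtain ⟨w, hw, hDw⟩ := hsub h0m
        have : Pstar.fn w = P.fn w := by
          have : P.fn w - Pstar.fn w = 0 := hDw
          linarith
        exact hnc w (lt_of_lt_of_le h1 hw.1) (lt_of_le_of_lt hw.2 hxst3) this
  
  -- values at junctions
  have hFC : Pstar.fn C.1 = C.2 := hCc.symm
  have hGC : P.fn C.1 = C.2 := hCc'.symm
  have hFC' : Pstar.fn C'.1 = C'.2 := hC'c.symm
  have hGC' : P.fn C'.1 = C'.2 := hC'c'.symm
  have hCC' : C.1 < C'.1 := by linarith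
  classical
  -- the grid
  set V : Finset ℝ := (Finset.range (Pstar.k+1)).image (fun j => (Pstar.v j).1) with hVdef
  set W : Finset ℝ := ((Finset.range (P.k+1)).image (fun j => (P.v j).1)).filter
    (fun t => C.1 ≤ t ∧ t ≤ C'.1) with hWdef
  set X : Finset ℝ := V ∪ W ∪ {C.1, C'.1, xst} with hXdef
  set xs := Finset.sort X (· ≤ ·) with hxsdef
  set n := xs.length with hndef
  set ξ : ℕ → ℝ := fun i => xs.getD i 0 with hxidef
  have hmemV : ∀ j ≤ Pstar.k, (Pstar.v j).1 ∈ X := by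
    intro j hj
    apply Finset.mem_union_left
    apply Finset.mem_union_left
    exact Finset.mem_image.2 ⟨j, Finset.mem_range.2 (by omega), rfl⟩
  have hmemW : ∀ j ≤ P.k, C.1 ≤ (P.v j).1 → (P.v j).1 ≤ C'.1 → (P.v j).1 ∈ X := by
    intro j hj h1 h2
    apply Finset.mem_union_left
    apply Finset.mem_union_right
    exact Finset.mem_filter.2 ⟨Finset.mem_image.2 ⟨j, Finset.mem_range.2 (by omega), rfl⟩,
      ⟨h1, h2⟩⟩
  have hCX : C.1 ∈ X := Finset.mem_union_right _ (by simp)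
  have hC'X : C'.1 ∈ X := Finset.mem_union_right _ (by simp)
  have hxstX : xst ∈ X := Finset.mem_union_right _ (by simp)
  have hXbound : ∀ t ∈ X, Y.1 ≤ t ∧ t ≤ T.1 := by
    intro t ht
    rcases Finset.mem_union.1 ht with h | h
    · rcases Finset.mem_union.1 h with h | h
      · obtain ⟨j, hj, rfl⟩ := Finset.mem_image.1 h
        have hjk := Finset.mem_range.1 hj
        constructor
        · rw [← hx0]; exact xle hI (by omega) (by omega)
        · rw [← hxk]; exact xle hI (by omega) (le_refl _)
      · obtain ⟨_, hcond⟩ := Finset.mem_filter.1 h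
        exact ⟨by linarith [hcond.1], by linarith [hcond.2]⟩
    · simp only [Finset.mem_insert, Finset.mem_singleton] at h
      rcases h with h | h | h <;> subst h
      · exact ⟨hCa, le_of_lt hCltT⟩
      · exact ⟨by linarith, hC'b⟩
      · exact ⟨by linarith, hxstT⟩
  have hsort : xs.Pairwise (· < ·) := (Finset.sortedLT_sort X).pairwise
  have hltξ : ∀ i j, i < j → j < n → ξ i < ξ j := by
    intro i j hij hj
    have hj' : j < xs.length := by rw [← hndef]; exact hj
    have hi' : i < xs.length := by omega
    show xs.getD i 0 < xs.getD j 0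
    rw [List.getD_eq_getElem _ _ hi', List.getD_eq_getElem _ _ hj']
    exact List.pairwise_iff_getElem.1 hsort i j hi' hj' hij
  have hmonoξ : ∀ i j, i ≤ j → j < n → ξ i ≤ ξ j := by
    intro i j hij hj
    rcases eq_or_lt_of_le hij with h | h
    · subst h; exact le_refl _
    · exact le_of_lt (hltξ i j h hj)
  have hreflξ : ∀ i j, i < n → j < n → ξ i < ξ j → i < j := by
    intro i j hi hj hij
    by_contra hcon
    push_neg at hcon
    exact absurd (hmonoξ j i hcon hi) (not_le.2 hij)
  have hgetmem : ∀ i < n, ξ i ∈ X := by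
    intro i hi
    have hi' : i < xs.length := by rw [← hndef]; exact hi
    show xs.getD i 0 ∈ X
    rw [List.getD_eq_getElem _ _ hi']
    exact (Finset.mem_sort (α := ℝ) (· ≤ ·)).1 (List.getElem_mem hi')
  have hfind : ∀ t ∈ X, ∃ i < n, ξ i = t := by
    intro t ht
    have htmem : t ∈ xs := (Finset.mem_sort (α := ℝ) (· ≤ ·)).2 ht
    obtain ⟨i, hi, hie⟩ := List.mem_iff_getElem.1 htmem
    refine ⟨i, by rw [hndef]; exact hi, ?_⟩
    show xs.getD i 0 = t
    rw [List.getD_eq_getElem _ _ hi]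
    exact hie
  have hYX : Y.1 ∈ X := by have h := hmemV 0 (by omega); rw [hx0] at h; exact h
  have hTX : T.1 ∈ X := by have h := hmemV Pstar.k (le_refl _); rw [hxk] at h; exact h
  have hn2 : 2 ≤ n := by
    rw [hndef, hxsdef, Finset.length_sort]
    refine Finset.one_lt_card.2 ⟨Y.1, hYX, T.1, hTX, ?_⟩
    exact ne_of_lt (lt_of_le_of_lt hCa hCltT)
  set m := n - 1 with hmdef
  have hm1 : 1 ≤ m := by omega
  have hξ0 : ξ 0 = Y.1 := by
    obtain ⟨i, hi, hie⟩ := hfind Y.1 hYX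
    have h1 : Y.1 ≤ ξ 0 := (hXbound _ (hgetmem 0 (by omega))).1
    have h2 : ξ 0 ≤ Y.1 := by
      rcases Nat.eq_zero_or_pos i with h | h
      · rw [← hie, h]
      · rw [← hie]; exact le_of_lt (hltξ 0 i h hi)
    linarith
  have hξm : ξ m = T.1 := by
    obtain ⟨i, hi, hie⟩ := hfind T.1 hTX
    have h1 : ξ m ≤ T.1 := (hXbound _ (hgetmem m (by omega))).2
    have h2 : T.1 ≤ ξ m := by
      rw [← hie]
      exact hmonoξ i m (by omega) (by omega)
    linarith
  -- the glued function
  set val : ℝ → ℝ := fun t => if C.1 < t ∧ t < C'.1 then P.fn t else Pstar.fn t with hvaldef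
  have hvalF : ∀ t, t ≤ C.1 ∨ C'.1 ≤ t → val t = Pstar.fn t := by
    intro t ht
    show (if C.1 < t ∧ t < C'.1 then P.fn t else Pstar.fn t) = Pstar.fn t
    rw [if_neg]
    rintro ⟨h1, h2⟩
    rcases ht with h | h
    · linarith
    · linarith
  have hvalG : ∀ t, C.1 ≤ t → t ≤ C'.1 → val t = P.fn t := by
    intro t h1 h2
    rcases eq_or_lt_of_le h1 with h | h
    · rw [hvalF t (Or.inl (le_of_eq h.symm)), ← h, hFC, hGC]
    · rcases eq_or_lt_of_le h2 with h' | h'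
      · rw [hvalF t (Or.inr (le_of_eq h'.symm)), h', hFC', hGC']
      · show (if C.1 < t ∧ t < C'.1 then P.fn t else Pstar.fn t) = P.fn t
        rw [if_pos ⟨h, h'⟩]
  have hFle : ∀ t, Pstar.fn t ≤ val t := by
    intro t
    by_cases hcase : C.1 < t ∧ t < C'.1
    · show Pstar.fn t ≤ (if C.1 < t ∧ t < C'.1 then P.fn t else Pstar.fn t)
      rw [if_pos hcase]
      exact le_of_lt (hFG t hcase.1 hcase.2)
    · rw [hvalF t ?_]
      · rcases not_and_or.1 hcase with h | h
        · exact Or.inl (not_lt.1 h)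
        · exact Or.inr (not_lt.1 h)
  -- region trichotomy for grid edges
  have hreg : ∀ i, i + 1 < n → ξ (i+1) ≤ C.1 ∨ (C.1 ≤ ξ i ∧ ξ (i+1) ≤ C'.1) ∨ C'.1 ≤ ξ i := by
    intro i hi
    obtain ⟨a, han, ha⟩ := hfind C.1 hCX
    obtain ⟨b, hbn, hb⟩ := hfind C'.1 hC'X
    rcases le_or_gt (ξ (i+1)) C.1 with h | h
    · exact Or.inl h
    · have hai : a ≤ i := by
        have := hreflξ a (i+1) han hi (by rw [ha]; exact h)
        omega
      have hCi : C.1 ≤ ξ i := by rw [← ha]; exact hmonoξ a i hai (by omega)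
      rcases le_or_gt (ξ (i+1)) C'.1 with h' | h'
      · exact Or.inr (Or.inl ⟨hCi, h'⟩)
      · have hbi : b ≤ i := by
          have := hreflξ b (i+1) hbn hi (by rw [hb]; exact h')
          omega
        exact Or.inr (Or.inr (by rw [← hb]; exact hmonoξ b i hbi (by omega)))
  have hFmono := fn_monotone hI hk
  have hGmono := fn_monotone hI' hk'
  -- monotone along grid
  have hvalm : ∀ i, i + 1 < n → val (ξ i) ≤ val (ξ (i+1)) := by
    intro i hi
    have hab : ξ i < ξ (i+1) := hltξ i (i+1) (by omega) hi
    rcases hreg i hi with hL | hM | hR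
    · rw [hvalF _ (Or.inl (by linarith)), hvalF _ (Or.inl hL)]
      exact hFmono (le_of_lt hab)
    · rw [hvalG _ hM.1 (by linarith [hM.2]), hvalG _ (by linarith [hM.1]) hM.2]
      exact hGmono (le_of_lt hab)
    · rw [hvalF _ (Or.inr hR), hvalF _ (Or.inr (by linarith))]
      exact hFmono (le_of_lt hab)
  have hFcv := fn_convexOn (Q := Pstar) hk
  have hGcv := fn_convexOn (Q := P) hk'
  -- slopes of val along grid are nondecreasing
  have hslope : ∀ i, i + 1 < m →
      (val (ξ (i+1)) - val (ξ i)) / (ξ (i+1) - ξ i)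
        ≤ (val (ξ (i+2)) - val (ξ (i+1))) / (ξ (i+2) - ξ (i+1)) := by
    intro i hi
    have hi1 : i + 1 < n := by omega
    have hi2 : i + 2 < n := by omega
    have hab : ξ i < ξ (i+1) := hltξ i (i+1) (by omega) hi1
    have hbc : ξ (i+1) < ξ (i+2) := hltξ (i+1) (i+2) (by omega) hi2
    have e1 := hreg i hi1
    have e2 := hreg (i+1) hi2
    rcases e2 with hL2 | hM2 | hR2
    · -- all left, pure F
      rw [hvalF _ (Or.inl (by linarith)), hvalF _ (Or.inl (by linarith)),
        hvalF _ (Or.inl hL2)]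
      exact ConvexOn.slope_mono_adjacent hFcv (mem_univ _) (mem_univ _) hab hbc
    · obtain ⟨hCb, hcC'⟩ := hM2
      have hvb : val (ξ (i+1)) = P.fn (ξ (i+1)) := hvalG _ hCb (by linarith)
      have hvc : val (ξ (i+2)) = P.fn (ξ (i+2)) := hvalG _ (by linarith) hcC'
      rcases le_or_gt (ξ (i+1)) C.1 with hbC | hbC
      · -- ξ (i+1) = C.1 junction
        have hbeq : ξ (i+1) = C.1 := le_antisymm hbC hCb
        have hva : val (ξ i) = Pstar.fn (ξ i) := hvalF _ (Or.inl (by linarith))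
        have hFGb : Pstar.fn (ξ (i+1)) = P.fn (ξ (i+1)) := by
          rw [hbeq, hFC, hGC]
        have hFGc : Pstar.fn (ξ (i+2)) ≤ P.fn (ξ (i+2)) := by
          rcases eq_or_lt_of_le hcC' with h | h
          · rw [h, hFC', hGC']
          · exact le_of_lt (hFG _ (by linarith) h)
        rw [hva, hvb, hvc]
        have step1 : (Pstar.fn (ξ (i+1)) - Pstar.fn (ξ i)) / (ξ (i+1) - ξ i)
            ≤ (Pstar.fn (ξ (i+2)) - Pstar.fn (ξ (i+1))) / (ξ (i+2) - ξ (i+1)) :=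
          ConvexOn.slope_mono_adjacent hFcv (mem_univ _) (mem_univ _) hab hbc
        have hd2 : (0:ℝ) < ξ (i+2) - ξ (i+1) := by linarith
        have step2 : (Pstar.fn (ξ (i+2)) - Pstar.fn (ξ (i+1))) / (ξ (i+2) - ξ (i+1))
            ≤ (P.fn (ξ (i+2)) - P.fn (ξ (i+1))) / (ξ (i+2) - ξ (i+1)) := by
          apply div_le_div_of_nonneg_right ?_ hd2.le |>.trans_eq rfl
          linarith [hFGc, hFGb.ge, hFGb.le]
        calc (P.fn (ξ (i+1)) - Pstar.fn (ξ i)) / (ξ (i+1) - ξ i)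
            = (Pstar.fn (ξ (i+1)) - Pstar.fn (ξ i)) / (ξ (i+1) - ξ i) := by rw [hFGb]
          _ ≤ (Pstar.fn (ξ (i+2)) - Pstar.fn (ξ (i+1))) / (ξ (i+2) - ξ (i+1)) := step1
          _ ≤ (P.fn (ξ (i+2)) - P.fn (ξ (i+1))) / (ξ (i+2) - ξ (i+1)) := step2
      · -- interior of middle region
        rcases e1 with hL1 | hM1 | hR1
        · exact absurd hL1 (not_le.2 hbC)
        · have hva : val (ξ i) = P.fn (ξ i) := hvalG _ hM1.1 (by linarith [hM1.2])
          rw [hva, hvb, hvc]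
          exact ConvexOn.slope_mono_adjacent hGcv (mem_univ _) (mem_univ _) hab hbc
        · exfalso
          have : C'.1 ≤ ξ i := hR1
          linarith [hcC', hab, hbc]
    · -- right region for second edge
      have hvb : val (ξ (i+1)) = Pstar.fn (ξ (i+1)) := hvalF _ (Or.inr hR2)
      have hvc : val (ξ (i+2)) = Pstar.fn (ξ (i+2)) := hvalF _ (Or.inr (by linarith))
      rcases e1 with hL1 | hM1 | hR1
      · exfalso; linarith
      · -- junction at C'
        have hbeq : ξ (i+1) = C'.1 := le_antisymm hM1.2 hR2
        have hva : val (ξ i) = P.fn (ξ i) := hvalG _ hM1.1 (by linarith [hM1.2])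
        have hFGb : Pstar.fn (ξ (i+1)) = P.fn (ξ (i+1)) := by rw [hbeq, hFC', hGC']
        have hFGa : Pstar.fn (ξ i) ≤ P.fn (ξ i) := by
          rw [← hva]; exact hFle (ξ i)
        rw [hva, hvb, hvc]
        have hd1 : (0:ℝ) < ξ (i+1) - ξ i := by linarith
        have step1 : (P.fn (ξ (i+1)) - P.fn (ξ i)) / (ξ (i+1) - ξ i)
            ≤ (Pstar.fn (ξ (i+1)) - Pstar.fn (ξ i)) / (ξ (i+1) - ξ i) := by
          apply div_le_div_of_nonneg_right ?_ hd1.le |>.trans_eq rfl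
          linarith [hFGa, hFGb.ge, hFGb.le]
        have step2 : (Pstar.fn (ξ (i+1)) - Pstar.fn (ξ i)) / (ξ (i+1) - ξ i)
            ≤ (Pstar.fn (ξ (i+2)) - Pstar.fn (ξ (i+1))) / (ξ (i+2) - ξ (i+1)) :=
          ConvexOn.slope_mono_adjacent hFcv (mem_univ _) (mem_univ _) hab hbc
        calc (Pstar.fn (ξ (i+1)) - P.fn (ξ i)) / (ξ (i+1) - ξ i)
            = (P.fn (ξ (i+1)) - P.fn (ξ i)) / (ξ (i+1) - ξ i) := by rw [hFGb]
          _ ≤ (Pstar.fn (ξ (i+1)) - Pstar.fn (ξ i)) / (ξ (i+1) - ξ i) := step1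
          _ ≤ (Pstar.fn (ξ (i+2)) - Pstar.fn (ξ (i+1))) / (ξ (i+2) - ξ (i+1)) := step2
      · have hva : val (ξ i) = Pstar.fn (ξ i) := hvalF _ (Or.inr hR1)
        rw [hva, hvb, hvc]
        exact ConvexOn.slope_mono_adjacent hFcv (mem_univ _) (mem_univ _) hab hbc
  
  -- the substitute chain
  set P' : PolyChain := ⟨m, fun i => (ξ i, val (ξ i))⟩ with hP'def
  have hP'v : ∀ i, P'.v i = (ξ i, val (ξ i)) := fun i => rfl
  have hP'k : P'.k = m := rfl
  have hP'inc : P'.Increasing := by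
    intro i hi
    rw [hP'k] at hi
    rw [hP'v, hP'v]
    exact ⟨hltξ i (i+1) (by omega) (by omega), hvalm i (by omega)⟩
  have hP'cvx : P'.ConvexChain := by
    intro i hi
    rw [hP'k] at hi
    rw [hP'v, hP'v, hP'v]
    exact slope_to_cross (hltξ i (i+1) (by omega) (by omega))
      (hltξ (i+1) (i+2) (by omega) (by omega)) (hslope i (by omega))
  have hvalY : val Y.1 = Y.2 := by rw [hvalF Y.1 (Or.inl hCa), hFY]
  have hvalT : val T.1 = T.2 := by rw [hvalF T.1 (Or.inr hC'b), hFT]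
  have hP'0 : P'.v 0 = Y := by
    rw [hP'v, hξ0, hvalY]
  have hP'last : P'.v P'.k = T := by
    rw [hP'k, hP'v, hξm, hvalT]
  -- collision freedom
  have hsub : P'.pts ⊆ Pstar.pts ∪ P.pts := by
    intro z hz
    obtain ⟨i, hi', hseg⟩ := mem_iUnion₂.1 hz
    have hi : i < m := Finset.mem_range.1 hi'
    have hin1 : i + 1 < n := by omega
    have hab : ξ i < ξ (i+1) := hltξ i (i+1) (by omega) hin1
    have hbound1 := hXbound _ (hgetmem i (by omega))
    have hbound2 := hXbound _ (hgetmem (i+1) hin1)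
    rw [hP'v, hP'v] at hseg
    rcases hreg i hin1 with hL | hM | hR
    · left
      have hva : val (ξ i) = Pstar.fn (ξ i) := hvalF _ (Or.inl (by linarith))
      have hvb : val (ξ (i+1)) = Pstar.fn (ξ (i+1)) := hvalF _ (Or.inl hL)
      rw [hva, hvb] at hseg
      refine sub_edge hI hCx hk hab (by rw [hx0]; exact hbound1.1)
        (by rw [hxk]; exact hbound2.2) ?_ hseg
      intro j hj hmem
      obtain ⟨l, hl, hle2⟩ := hfind _ (hmemV j hj)
      obtain ⟨h1, h2⟩ := hmem
      rw [← hle2] at h1 h2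
      have o1 := hreflξ i l (by omega) hl h1
      have o2 := hreflξ l (i+1) hl hin1 h2
      omega
    · right
      have hva : val (ξ i) = P.fn (ξ i) := hvalG _ hM.1 (by linarith [hM.2])
      have hvb : val (ξ (i+1)) = P.fn (ξ (i+1)) := hvalG _ (by linarith [hM.1]) hM.2
      rw [hva, hvb] at hseg
      refine sub_edge hI' hCx' hk' hab (by rw [hx0']; linarith [hM.1])
        (by rw [hxk']; linarith [hM.2]) ?_ hseg
      intro j hj hmem
      obtain ⟨h1, h2⟩ := hmem
      have hjmem : (P.v j).1 ∈ X := hmemW j hj (by linarith [hM.1]) (by linarith [hM.2])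
      obtain ⟨l, hl, hle2⟩ := hfind _ hjmem
      rw [← hle2] at h1 h2
      have o1 := hreflξ i l (by omega) hl h1
      have o2 := hreflξ l (i+1) hl hin1 h2
      omega
    · left
      have hva : val (ξ i) = Pstar.fn (ξ i) := hvalF _ (Or.inr hR)
      have hvb : val (ξ (i+1)) = Pstar.fn (ξ (i+1)) := hvalF _ (Or.inr (by linarith))
      rw [hva, hvb] at hseg
      refine sub_edge hI hCx hk hab (by rw [hx0]; exact hbound1.1)
        (by rw [hxk]; exact hbound2.2) ?_ hseg
      intro j hj hmem
      obtain ⟨l, hl, hle2⟩ := hfind _ (hmemV j hj)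
      obtain ⟨h1, h2⟩ := hmem
      rw [← hle2] at h1 h2
      have o1 := hreflξ i l (by omega) hl h1
      have o2 := hreflξ l (i+1) hl hin1 h2
      omega
  have hP'CF : CollisionFree P' O := by
    intro o ho
    exact Disjoint.mono_left hsub (Set.disjoint_union_left.2 ⟨hCF o ho, hCF' o ho⟩)
  -- length computations
  have hlen1 : Pstar.length = ∑ i ∈ Finset.range m,
      eudist (ξ i, Pstar.fn (ξ i)) (ξ (i+1), Pstar.fn (ξ (i+1))) := by
    have := length_refine hI hCx hk ξ hn2 hltξ ?_ ?_
    · rw [this]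
    · intro i hi
      have := hXbound _ (hgetmem i hi)
      exact ⟨by rw [hx0]; exact this.1, by rw [hxk]; exact this.2⟩
    · intro j hj
      exact hfind _ (hmemV j hj)
  have hlen2 : P'.length = ∑ i ∈ Finset.range m,
      eudist (ξ i, val (ξ i)) (ξ (i+1), val (ξ (i+1))) := rfl
  -- the strict inequality
  obtain ⟨j0, hj0n, hj0e⟩ := hfind xst hxstX
  have hj0m : j0 ≤ m := by omega
  have hstrict : Pstar.fn (ξ j0) < val (ξ j0) := by
    rw [hj0e, hvalG xst (le_of_lt hxst1) (le_of_lt hxst3)]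
    exact hxstlt
  have hmainlt := discrete_len (n := m) (by omega) ξ
    (fun i => Pstar.fn (ξ i)) (fun i => val (ξ i))
    (fun i hi => hltξ i (i+1) (by omega) (by omega))
    (fun i hi => hvalm i (by omega))
    (fun i hi => hslope i hi)
    (fun i _ => hFle (ξ i))
    (by show Pstar.fn (ξ 0) = val (ξ 0); rw [hξ0, hvalY, hFY])
    (by show Pstar.fn (ξ m) = val (ξ m); rw [hξm, hvalT, hFT])
    ⟨j0, hj0m, hstrict⟩
  have hminle := hmin P' ⟨hP'inc, hP'cvx, hP'0, hP'last, hP'CF⟩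
  rw [hlen1] at hminle
  rw [hlen2] at hminle
  linarith
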